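/- Let M be the 2×2 complex matrix with entries M₁₁ = θ₁(s_k+u|2τ), M₁₂ = γ_k·θ₁(t_k−u|2τ), M₂₁ = θ₄(s_k+u|2τ), M₂₂ = γ_k·θ₄(t_k−u|2τ), where s_k = s+kη, t_k = t+kη, x_k = (s+t)/2 + kη, and γ_k = 2/(θ₂(x_k|τ)·θ₂(0|τ)). Then det M = 2·θ₁(y+u|τ)/θ₂(0|τ), where y = (s−t)/2. -/

import Mathlib

open Complex

/-- Jacobi theta function θ₁(u|τ). -/
noncomputable def theta1 (u τ : ℂ) : ℂ :=
  -I * ∑' k : ℤ, (-1 : ℂ) ^ k * Complex.exp ((Real.pi : ℂ) * I * τ * ((k : ℂ) + 1/2) ^ 2) *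
      Complex.exp ((Real.pi : ℂ) * I * (2 * (k : ℂ) + 1) * u)

/-- Jacobi theta function θ₂(u|τ). -/
noncomputable def theta2 (u τ : ℂ) : ℂ :=
  ∑' k : ℤ, Complex.exp ((Real.pi : ℂ) * I * τ * ((k : ℂ) + 1/2) ^ 2) *
      Complex.exp ((Real.pi : ℂ) * I * (2 * (k : ℂ) + 1) * u)

/-- Jacobi theta function θ₃(u|τ). -/
noncomputable def theta3 (u τ : ℂ) : ℂ :=
  ∑' k : ℤ, Complex.exp ((Real.pi : ℂ) * I * τ * (k : ℂ) ^ 2) *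
      Complex.exp (2 * (Real.pi : ℂ) * I * (k : ℂ) * u)

/-- Jacobi theta function θ₄(u|τ). -/
noncomputable def theta4 (u τ : ℂ) : ℂ :=
  ∑' k : ℤ, (-1 : ℂ) ^ k * Complex.exp ((Real.pi : ℂ) * I * τ * (k : ℂ) ^ 2) *
      Complex.exp (2 * (Real.pi : ℂ) * I * (k : ℂ) * u)

/-! ### Auxiliary term functions and their basic properties -/

noncomputable def t1term (x τ : ℂ) (k : ℤ) : ℂ :=
  (-1 : ℂ) ^ k * Complex.exp ((Real.pi : ℂ) * I * τ * ((k : ℂ) + 1/2) ^ 2) *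
      Complex.exp ((Real.pi : ℂ) * I * (2 * (k : ℂ) + 1) * x)

noncomputable def t2term (x τ : ℂ) (k : ℤ) : ℂ :=
  Complex.exp ((Real.pi : ℂ) * I * τ * ((k : ℂ) + 1/2) ^ 2) *
      Complex.exp ((Real.pi : ℂ) * I * (2 * (k : ℂ) + 1) * x)

noncomputable def t4term (x τ : ℂ) (k : ℤ) : ℂ :=
  (-1 : ℂ) ^ k * Complex.exp ((Real.pi : ℂ) * I * τ * (k : ℂ) ^ 2) *
      Complex.exp (2 * (Real.pi : ℂ) * I * (k : ℂ) * x)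

lemma theta1_eq (x τ : ℂ) : theta1 x τ = -I * ∑' k : ℤ, t1term x τ k := rfl
lemma theta2_eq (x τ : ℂ) : theta2 x τ = ∑' k : ℤ, t2term x τ k := rfl
lemma theta4_eq (x τ : ℂ) : theta4 x τ = ∑' k : ℤ, t4term x τ k := rfl

lemma neg_one_zpow_eq_exp (k : ℤ) : (-1 : ℂ) ^ k = Complex.exp ((Real.pi : ℂ) * I * k) := by
  rw [show ((Real.pi : ℂ) * I * k) = (k : ℂ) * ((Real.pi : ℂ) * I) by ring,
    Complex.exp_int_mul, Complex.exp_pi_mul_I]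

lemma t1term_eq (x τ : ℂ) (k : ℤ) :
    t1term x τ k = Complex.exp ((Real.pi : ℂ) * I * τ / 4 + (Real.pi : ℂ) * I * x) *
      jacobiTheta₂_term k (x + τ / 2 + 1 / 2) τ := by
  rw [t1term, jacobiTheta₂_term, neg_one_zpow_eq_exp, ← Complex.exp_add,
    ← Complex.exp_add, ← Complex.exp_add]
  congr 1
  ring

lemma t2term_eq (x τ : ℂ) (k : ℤ) :
    t2term x τ k = Complex.exp ((Real.pi : ℂ) * I * τ / 4 + (Real.pi : ℂ) * I * x) *
      jacobiTheta₂_term k (x + τ / 2) τ := by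
  rw [t2term, jacobiTheta₂_term, ← Complex.exp_add, ← Complex.exp_add]
  congr 1
  ring

lemma t4term_eq (x τ : ℂ) (k : ℤ) :
    t4term x τ k = jacobiTheta₂_term k (x + 1 / 2) τ := by
  rw [t4term, jacobiTheta₂_term, neg_one_zpow_eq_exp, ← Complex.exp_add,
    ← Complex.exp_add]
  congr 1
  ring

lemma summable_t1 (x τ : ℂ) (hτ : 0 < τ.im) : Summable (t1term x τ) := by
  have h := ((summable_jacobiTheta₂_term_iff (x + τ / 2 + 1 / 2) τ).mpr hτ).mul_left
    (Complex.exp ((Real.pi : ℂ) * I * τ / 4 + (Real.pi : ℂ) * I * x))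
  exact h.congr fun k => (t1term_eq x τ k).symm

lemma summable_t2 (x τ : ℂ) (hτ : 0 < τ.im) : Summable (t2term x τ) := by
  have h := ((summable_jacobiTheta₂_term_iff (x + τ / 2) τ).mpr hτ).mul_left
    (Complex.exp ((Real.pi : ℂ) * I * τ / 4 + (Real.pi : ℂ) * I * x))
  exact h.congr fun k => (t2term_eq x τ k).symm

lemma summable_t4 (x τ : ℂ) (hτ : 0 < τ.im) : Summable (t4term x τ) := by
  have h := (summable_jacobiTheta₂_term_iff (x + 1 / 2) τ).mpr hτ
  exact h.congr fun k => (t4term_eq x τ k).symm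

lemma neg_one_zpow_mul_self (k : ℤ) : (-1 : ℂ) ^ k * (-1 : ℂ) ^ k = 1 := by
  rw [← zpow_add₀ (by norm_num : (-1 : ℂ) ≠ 0), show k + k = 2 * k by ring, zpow_mul]
  norm_num

lemma neg_one_zpow_inv (k : ℤ) : ((-1 : ℂ) ^ k)⁻¹ = (-1 : ℂ) ^ k :=
  inv_eq_of_mul_eq_one_right (neg_one_zpow_mul_self k)

/-- The reindexing `k ↦ -k-1`. -/
def negSub : ℤ ≃ ℤ := (Equiv.neg ℤ).trans (Equiv.subRight 1)

lemma negSub_apply (k : ℤ) : negSub k = -k - 1 := rfl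

lemma theta2_neg (x τ : ℂ) : theta2 (-x) τ = theta2 x τ := by
  rw [theta2_eq, theta2_eq, ← Equiv.tsum_eq negSub (t2term x τ)]
  refine tsum_congr fun k => ?_
  rw [t2term, t2term, negSub_apply]
  push_cast
  rw [show ((-(k : ℂ) - 1) + 1/2) ^ 2 = ((k : ℂ) + 1/2) ^ 2 by ring]
  congr 2
  ring

lemma theta1_neg (x τ : ℂ) : theta1 (-x) τ = -theta1 x τ := by
  rw [theta1_eq, theta1_eq]
  have h : ∀ k : ℤ, t1term x τ (negSub k) = -t1term (-x) τ k := by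
    intro k
    rw [t1term, t1term, negSub_apply]
    have hpow : (-1 : ℂ) ^ (-k - 1) = -(-1 : ℂ) ^ k := by
      rw [show -k - 1 = -(k + 1) by ring, zpow_neg, zpow_add₀ (by norm_num : (-1 : ℂ) ≠ 0),
        zpow_one, mul_inv, neg_one_zpow_inv]
      norm_num
    rw [hpow]
    push_cast
    rw [show ((-(k : ℂ) - 1) + 1/2) ^ 2 = ((k : ℂ) + 1/2) ^ 2 by ring,
      show (Real.pi : ℂ) * I * (2 * (-(k : ℂ) - 1) + 1) * x
        = (Real.pi : ℂ) * I * (2 * (k : ℂ) + 1) * (-x) by ring]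
    ring
  rw [← Equiv.tsum_eq negSub (t1term x τ)]
  simp_rw [h, tsum_neg]
  ring

/-- The key addition formula:
`2 θ₁(a+b|2τ) θ₄(a-b|2τ) = θ₁(a|τ) θ₂(b|τ) + θ₂(a|τ) θ₁(b|τ)`. -/
lemma key_addition (τ a b : ℂ) (hτ : 0 < τ.im) :
    2 * theta1 (a + b) (2 * τ) * theta4 (a - b) (2 * τ)
      = theta1 a τ * theta2 b τ + theta2 a τ * theta1 b τ := by
  have h2τ : 0 < (2 * τ).im := by simp [Complex.mul_im]; linarith
  have S1 : Summable (t1term (a + b) (2 * τ)) := summable_t1 _ _ h2τ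
  have S4 : Summable (t4term (a - b) (2 * τ)) := summable_t4 _ _ h2τ
  have S1a : Summable (t1term a τ) := summable_t1 _ _ hτ
  have S1b : Summable (t1term b τ) := summable_t1 _ _ hτ
  have S2a : Summable (t2term a τ) := summable_t2 _ _ hτ
  have S2b : Summable (t2term b τ) := summable_t2 _ _ hτ
  have n1 : Summable fun k => ‖t1term (a + b) (2 * τ) k‖ := summable_norm_iff.mpr S1
  have n4 : Summable fun k => ‖t4term (a - b) (2 * τ) k‖ := summable_norm_iff.mpr S4
  have n1a : Summable fun k => ‖t1term a τ k‖ := summable_norm_iff.mpr S1a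
  have n1b : Summable fun k => ‖t1term b τ k‖ := summable_norm_iff.mpr S1b
  have n2a : Summable fun k => ‖t2term a τ k‖ := summable_norm_iff.mpr S2a
  have n2b : Summable fun k => ‖t2term b τ k‖ := summable_norm_iff.mpr S2b
  rw [theta1_eq, theta4_eq, theta1_eq, theta1_eq, theta2_eq, theta2_eq]
  rw [show 2 * (-I * ∑' k : ℤ, t1term (a + b) (2 * τ) k) * (∑' k : ℤ, t4term (a - b) (2 * τ) k)
      = -I * (2 * ((∑' k : ℤ, t1term (a + b) (2 * τ) k) * ∑' k : ℤ, t4term (a - b) (2 * τ) k))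
      by ring,
    show -I * (∑' k : ℤ, t1term a τ k) * (∑' k : ℤ, t2term b τ k)
        + (∑' k : ℤ, t2term a τ k) * (-I * ∑' k : ℤ, t1term b τ k)
      = -I * ((∑' k : ℤ, t1term a τ k) * (∑' k : ℤ, t2term b τ k)
          + (∑' k : ℤ, t2term a τ k) * (∑' k : ℤ, t1term b τ k)) by ring]
  congr 1
  rw [tsum_mul_tsum_of_summable_norm n1 n4, tsum_mul_tsum_of_summable_norm n1a n2b,
    tsum_mul_tsum_of_summable_norm n2a n1b, ← tsum_mul_left,
    ← Summable.tsum_add (summable_mul_of_summable_norm n1a n2b) (summable_mul_of_summable_norm n2a n1b)]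
  -- the target: ∑' p, 2 * (t1term (a+b) (2τ) p.1 * t4term (a-b) (2τ) p.2)
  --           = ∑' p, (t1term a τ p.1 * t2term b τ p.2 + t2term a τ p.1 * t1term b τ p.2)
  set P : ℤ × ℤ → ℂ := fun p =>
    t1term a τ p.1 * t2term b τ p.2 + t2term a τ p.1 * t1term b τ p.2 with hP
  have hinj : Function.Injective (fun q : ℤ × ℤ => (q.1 + q.2, q.1 - q.2)) := by
    rintro ⟨m, n⟩ ⟨m', n'⟩ h
    simp only [Prod.mk.injEq] at h
    rw [Prod.mk.injEq]
    omega
  have hsupp : Function.support P ⊆ Set.range (fun q : ℤ × ℤ => (q.1 + q.2, q.1 - q.2)) := by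
    rintro ⟨p, r⟩ hpr
    by_contra hnot
    apply hpr
    have hodd : Odd (p + r) := by
      rcases Int.even_or_odd (p + r) with ⟨m, hm⟩ | h
      · exact absurd ⟨(m, p - m), by simp only [Prod.mk.injEq]; omega⟩ hnot
      · exact h
    have hodd' : Odd (p - r) := by
      rcases hodd with ⟨m, hm⟩
      exact ⟨m - r, by omega⟩
    have hval : (-1 : ℂ) ^ p = -(-1 : ℂ) ^ r := by
      have h1 : (-1 : ℂ) ^ (p - r) = -1 := hodd'.neg_one_zpow
      have : (-1 : ℂ) ^ p = (-1 : ℂ) ^ (p - r) * (-1 : ℂ) ^ r := by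
        rw [← zpow_add₀ (by norm_num : (-1 : ℂ) ≠ 0)]; congr 1; ring
      rw [this, h1]; ring
    have e1 : t1term a τ p = (-1 : ℂ) ^ p * t2term a τ p := by rw [t1term, t2term]; ring
    have e2 : t1term b τ r = (-1 : ℂ) ^ r * t2term b τ r := by rw [t1term, t2term]; ring
    simp only [hP, e1, e2, hval]
    ring
  rw [← hinj.tsum_eq hsupp]
  refine tsum_congr fun q => ?_
  obtain ⟨m, n⟩ := q
  simp only [hP]
  have e1 : t1term a τ (m + n) = (-1 : ℂ) ^ (m + n) * t2term a τ (m + n) := by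
    rw [t1term, t2term]; ring
  have e2 : t1term b τ (m - n) = (-1 : ℂ) ^ (m - n) * t2term b τ (m - n) := by
    rw [t1term, t2term]; ring
  have hpar : (-1 : ℂ) ^ (m - n) = (-1 : ℂ) ^ (m + n) := by
    rw [show m - n = (m + n) + (-2) * n by ring,
      zpow_add₀ (by norm_num : (-1 : ℂ) ≠ 0), zpow_mul]
    norm_num
  have hexp : t2term a τ (m + n) * t2term b τ (m - n)
      = Complex.exp ((Real.pi : ℂ) * I * (2 * τ) * ((m : ℂ) + 1/2) ^ 2) *
          Complex.exp ((Real.pi : ℂ) * I * (2 * (m : ℂ) + 1) * (a + b)) *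
        (Complex.exp ((Real.pi : ℂ) * I * (2 * τ) * (n : ℂ) ^ 2) *
          Complex.exp (2 * (Real.pi : ℂ) * I * (n : ℂ) * (a - b))) := by
    rw [t2term, t2term]
    simp only [← Complex.exp_add]
    congr 1
    push_cast
    ring
  have h1t : t1term (a + b) (2 * τ) m = (-1 : ℂ) ^ m *
      (Complex.exp ((Real.pi : ℂ) * I * (2 * τ) * ((m : ℂ) + 1/2) ^ 2) *
        Complex.exp ((Real.pi : ℂ) * I * (2 * (m : ℂ) + 1) * (a + b))) := by
    rw [t1term]; ring
  have h4t : t4term (a - b) (2 * τ) n = (-1 : ℂ) ^ n *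
      (Complex.exp ((Real.pi : ℂ) * I * (2 * τ) * (n : ℂ) ^ 2) *
        Complex.exp (2 * (Real.pi : ℂ) * I * (n : ℂ) * (a - b))) := by
    rw [t4term]; ring
  have hmn : (-1 : ℂ) ^ (m + n) = (-1 : ℂ) ^ m * (-1 : ℂ) ^ n :=
    zpow_add₀ (by norm_num : (-1 : ℂ) ≠ 0) m n
  rw [e1, e2, hpar, h1t, h4t, hmn]
  linear_combination (-2 * (-1 : ℂ) ^ m * (-1 : ℂ) ^ n) * hexp

theorem gauge_matrix_det (τ s t u η : ℂ) (hτ : 0 < τ.im) (k : ℤ)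
    (hx : theta2 ((s + t) / 2 + (k : ℂ) * η) τ ≠ 0)
    (h0 : theta2 0 τ ≠ 0) :
    Matrix.det
      !![theta1 ((s + (k : ℂ) * η) + u) (2 * τ),
          (2 / (theta2 ((s + t) / 2 + (k : ℂ) * η) τ * theta2 0 τ)) *
            theta1 ((t + (k : ℂ) * η) - u) (2 * τ);
        theta4 ((s + (k : ℂ) * η) + u) (2 * τ),
          (2 / (theta2 ((s + t) / 2 + (k : ℂ) * η) τ * theta2 0 τ)) *
            theta4 ((t + (k : ℂ) * η) - u) (2 * τ)] =
      2 * theta1 ((s - t) / 2 + u) τ / theta2 0 τ := by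
  set a := (s + t) / 2 + (k : ℂ) * η with ha
  set b := (s - t) / 2 + u with hb
  have hA : (s + (k : ℂ) * η) + u = a + b := by rw [ha, hb]; ring
  have hB : (t + (k : ℂ) * η) - u = a - b := by rw [ha, hb]; ring
  rw [Matrix.det_fin_two_of, hA, hB]
  have key1 : 2 * theta1 (a + b) (2 * τ) * theta4 (a - b) (2 * τ)
      = theta1 a τ * theta2 b τ + theta2 a τ * theta1 b τ := key_addition τ a b hτ
  have key2 : 2 * theta1 (a - b) (2 * τ) * theta4 (a + b) (2 * τ)
      = theta1 a τ * theta2 b τ - theta2 a τ * theta1 b τ := by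
    have := key_addition τ a (-b) hτ
    rw [show a + -b = a - b by ring, show a - -b = a + b by ring, theta1_neg, theta2_neg] at this
    linear_combination this
  field_simp
  linear_combination (1/2 : ℂ) * key1 - (1/2 : ℂ) * key2
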